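/- For every ε in (0,1) and Λ ≥ 1, if M ≥ eΛ + 2·log(1/ε) and M ≥ 1, then Λ^M / M! ≤ ε. -/
import Mathlib


open Real

lemma pow_self_le_exp_mul_factorial (n : ℕ) :
    (n : ℝ) ^ n ≤ Real.exp n * n.factorial := by
  induction n with
  | zero => simp
  | succ n ih =>
    rcases Nat.eq_zero_or_pos n with h0 | hpos
    · subst h0
      simpa using Real.one_le_exp (by norm_num : (0:ℝ) ≤ 1)
    have hn : (0:ℝ) < n := by exact_mod_cast hpos
    have h1 : ((n:ℝ) + 1) ^ n ≤ Real.exp 1 * (n:ℝ) ^ n := by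
      have heq : ((n:ℝ) + 1) = (n:ℝ) * (1 + 1 / n) := by field_simp
      rw [heq, mul_pow]
      have h2 : (1 + 1 / (n:ℝ)) ^ n ≤ Real.exp 1 := by
        have h3 := Real.add_one_le_exp (1 / (n:ℝ))
        calc (1 + 1 / (n:ℝ)) ^ n ≤ (Real.exp (1 / n)) ^ n := by
              apply pow_le_pow_left₀ (by positivity)
              linarith
          _ = Real.exp 1 := by
              rw [← Real.exp_nat_mul]
              congr 1
              field_simp
      calc (n:ℝ) ^ n * (1 + 1 / (n:ℝ)) ^ n ≤ (n:ℝ) ^ n * Real.exp 1 :=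
            mul_le_mul_of_nonneg_left h2 (by positivity)
        _ = Real.exp 1 * (n:ℝ) ^ n := by ring
    have hfac : (0:ℝ) ≤ n.factorial := by positivity
    push_cast
    calc ((n:ℝ) + 1) ^ (n + 1) = ((n:ℝ) + 1) * ((n:ℝ) + 1) ^ n := by ring
      _ ≤ ((n:ℝ) + 1) * (Real.exp 1 * (n:ℝ) ^ n) := by
          exact mul_le_mul_of_nonneg_left h1 (by positivity)
      _ ≤ ((n:ℝ) + 1) * (Real.exp 1 * (Real.exp n * n.factorial)) := by
          have := mul_le_mul_of_nonneg_left ih (Real.exp_pos 1).le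
          exact mul_le_mul_of_nonneg_left this (by positivity)
      _ = Real.exp ((n:ℝ) + 1) * ((n + 1).factorial : ℝ) := by
          rw [Real.exp_add, Nat.factorial_succ]; push_cast; ring

theorem cheb_node_count_suffices (ε Λ : ℝ) (hε : ε ∈ Set.Ioo (0 : ℝ) 1) (hΛ : 1 ≤ Λ)
    (M : ℕ) (hM1 : 1 ≤ M)
    (hM : Real.exp 1 * Λ + 2 * Real.log (1 / ε) ≤ (M : ℝ)) :
    Λ ^ M / (Nat.factorial M : ℝ) ≤ ε := by
  obtain ⟨hε0, hε1⟩ := hε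
  have hL : 0 ≤ Real.log (1 / ε) := by
    apply Real.log_nonneg
    rw [le_div_iff₀ hε0]; linarith
  have hMpos : (0:ℝ) < M := by exact_mod_cast hM1
  have hΛ0 : (0:ℝ) < Λ := by linarith
  have hfac : (0:ℝ) < M.factorial := by exact_mod_cast M.factorial_pos
  have ht0 : (0:ℝ) < Real.exp 1 * Λ / M := by positivity
  -- step 1 : Λ^M / M! ≤ (e Λ / M)^M
  have step1 : Λ ^ M / (M.factorial : ℝ) ≤ (Real.exp 1 * Λ / M) ^ M := by
    have key := pow_self_le_exp_mul_factorial M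
    rw [div_le_iff₀ hfac, div_pow, div_mul_eq_mul_div, le_div_iff₀ (by positivity : (0:ℝ) < (M:ℝ)^M)]
    calc Λ ^ M * (M:ℝ) ^ M ≤ Λ ^ M * (Real.exp M * M.factorial) := by
          exact mul_le_mul_of_nonneg_left key (by positivity)
      _ = (Real.exp 1 * Λ) ^ M * (M.factorial : ℝ) := by
          rw [mul_pow, ← Real.exp_nat_mul]; ring_nf
  -- step 2 : (e Λ / M)^M ≤ ε
  have step2 : (Real.exp 1 * Λ / M) ^ M ≤ ε := by
    have hlog : Real.log (Real.exp 1 * Λ / M) ≤ Real.exp 1 * Λ / M - 1 :=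
      Real.log_le_sub_one_of_pos ht0
    have hmul : (M:ℝ) * Real.log (Real.exp 1 * Λ / M) ≤ Real.log ε := by
      have h1 : (M:ℝ) * Real.log (Real.exp 1 * Λ / M) ≤ (M:ℝ) * (Real.exp 1 * Λ / M - 1) :=
        mul_le_mul_of_nonneg_left hlog hMpos.le
      have h2 : (M:ℝ) * (Real.exp 1 * Λ / M - 1) = Real.exp 1 * Λ - M := by
        field_simp
      have h3 : Real.log (1 / ε) = - Real.log ε := by
        rw [one_div, Real.log_inv]
      nlinarith [hL]
    calc (Real.exp 1 * Λ / M) ^ M = Real.exp ((M:ℝ) * Real.log (Real.exp 1 * Λ / M)) := by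
          rw [Real.exp_nat_mul, Real.exp_log ht0]
      _ ≤ Real.exp (Real.log ε) := Real.exp_le_exp.mpr hmul
      _ = ε := Real.exp_log hε0
  exact step1.trans step2
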